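/- arXiv:2504.21523 — 2 statements merged into one kernel-verified Lean document; each statement's English description precedes it below -/
import Mathlib

section
/- Let 4 < α < 5 and set w_k = (-1)^k binom(α,k) for k ≥ 1. Then w_1 = -α < 0, w_2 = Γ(α+1)/(2Γ(α-1)) > 0, w_3 = -Γ(α+1)/(6Γ(α-2)) < 0, w_4 = Γ(α+1)/(24Γ(α-3)) > 0, w_k < 0 for every integer k ≥ 5, and the sum of the negative weights equals W_- := w_1 + w_3 + Σ_{k=5}^∞ w_k = -1 - Γ(α+1)/(2Γ(α-1)) - Γ(α+1)/(24Γ(α-3)). -/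
open Real

noncomputable def genBinom (a : ℝ) (k : ℕ) : ℝ :=
  (∏ j ∈ Finset.range k, (a - (j : ℝ))) / (Nat.factorial k : ℝ)

lemma genBinom_pascal (a : ℝ) (n : ℕ) :
    genBinom a (n+1) = genBinom (a-1) (n+1) + genBinom (a-1) n := by
  have h1 : ∏ j ∈ Finset.range (n+1), (a - (j:ℝ)) =
      (∏ j ∈ Finset.range n, (a - 1 - (j:ℝ))) * a := by
    rw [Finset.prod_range_succ']
    congr 1
    · apply Finset.prod_congr rfl
      intros j _
      push_cast; ring
    · simp
  have h2 : ∏ j ∈ Finset.range (n+1), (a - 1 - (j:ℝ)) =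
      (∏ j ∈ Finset.range n, (a - 1 - (j:ℝ))) * (a - 1 - n) :=
    Finset.prod_range_succ _ _
  have hfac : (Nat.factorial (n+1) : ℝ) = (n+1) * Nat.factorial n := by
    push_cast [Nat.factorial_succ]; ring
  have hf0 : (Nat.factorial n : ℝ) ≠ 0 := by positivity
  have hf1 : ((n:ℝ)+1) ≠ 0 := by positivity
  unfold genBinom
  rw [h1, h2, hfac]
  field_simp
  ring

lemma partial_sum_eq (a : ℝ) (n : ℕ) :
    ∑ k ∈ Finset.range (n+1), (-1:ℝ)^k * genBinom a k = (-1)^n * genBinom (a-1) n := by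
  induction n with
  | zero => simp [genBinom]
  | succ n ih =>
    rw [Finset.sum_range_succ, ih, genBinom_pascal]
    ring

lemma prod_bound (α : ℝ) (hα1 : 4 < α) (hα2 : α < 5) :
    ∀ n : ℕ, |∏ j ∈ Finset.range (n+4), (α - 1 - (j:ℝ))| ≤ 24 * Nat.factorial n := by
  have h1 : 0 < α - 1 := by linarith
  have h2 : 0 < α - 2 := by linarith
  have h3 : 0 < α - 3 := by linarith
  have h4 : 0 < α - 4 := by linarith
  intro n
  induction n with
  | zero =>
    have heq : ∏ j ∈ Finset.range 4, (α - 1 - (j:ℝ)) = (α-1)*(α-2)*(α-3)*(α-4) := by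
      simp [Finset.prod_range_succ]; ring
    rw [heq, abs_of_nonneg (by positivity)]
    simp only [Nat.factorial_zero, Nat.cast_one, mul_one]
    have b12 : (α-1)*(α-2) ≤ 12 := by nlinarith
    have b123 : (α-1)*(α-2)*(α-3) ≤ 24 := by nlinarith
    nlinarith
  | succ n ih =>
    have hrw : n + 1 + 4 = (n+4) + 1 := by ring
    rw [hrw, Finset.prod_range_succ, abs_mul]
    have hb : |α - 1 - (((n+4:ℕ)):ℝ)| ≤ (n:ℝ) + 1 := by
      push_cast
      rw [abs_of_nonpos (by linarith)]
      linarith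
    calc |∏ j ∈ Finset.range (n+4), (α - 1 - (j:ℝ))| * |α - 1 - (((n+4:ℕ)):ℝ)|
        ≤ (24 * Nat.factorial n) * ((n:ℝ)+1) :=
          mul_le_mul ih hb (abs_nonneg _) (by positivity)
      _ = 24 * Nat.factorial (n+1) := by
          push_cast [Nat.factorial_succ]; ring

lemma sign_lemma (α : ℝ) (hα1 : 4 < α) (hα2 : α < 5) :
    ∀ k : ℕ, 5 ≤ k → (-1:ℝ)^k * (∏ j ∈ Finset.range k, (α - (j:ℝ))) < 0 := by
  intro k hk
  induction k with
  | zero => omega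
  | succ k ih =>
    rcases Nat.lt_or_ge k 5 with h | h
    · have hk4 : k = 4 := by omega
      subst hk4
      have heq : ∏ j ∈ Finset.range 5, (α - (j:ℝ)) = α*(α-1)*(α-2)*(α-3)*(α-4) := by
        simp [Finset.prod_range_succ]
      have hpos : 0 < α*(α-1)*(α-2)*(α-3)*(α-4) := by
        have h1 : 0 < α - 1 := by linarith
        have h2 : 0 < α - 2 := by linarith
        have h3 : 0 < α - 3 := by linarith
        have h4 : 0 < α - 4 := by linarith
        positivity
      rw [show (4:ℕ)+1 = 5 from rfl, heq]
      norm_num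
      linarith
    · have ihh := ih h
      rw [Finset.prod_range_succ, pow_succ]
      have hneg : α - (k:ℝ) < 0 := by
        have : (5:ℝ) ≤ k := by exact_mod_cast h
        linarith
      nlinarith

lemma genBinom_neg (α : ℝ) (hα1 : 4 < α) (hα2 : α < 5) :
    ∀ k : ℕ, 5 ≤ k → (-1:ℝ)^k * genBinom α k < 0 := by
  intro k hk
  have h := sign_lemma α hα1 hα2 k hk
  have hf : (0:ℝ) < Nat.factorial k := by positivity
  unfold genBinom
  rw [← mul_div_assoc]
  exact div_neg_of_neg_of_pos h hf

lemma tail_bound (α : ℝ) (hα1 : 4 < α) (hα2 : α < 5) (n : ℕ) :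
    |(-1:ℝ)^(n+4) * genBinom (α-1) (n+4)| ≤ 24 / ((n:ℝ)+1) := by
  rw [abs_mul, abs_pow, abs_neg, abs_one, one_pow, one_mul]
  unfold genBinom
  rw [abs_div]
  have hb := prod_bound α hα1 hα2 n
  have hfpos : (0:ℝ) < Nat.factorial (n+4) := by positivity
  rw [abs_of_nonneg (le_of_lt hfpos)]
  rw [div_le_div_iff₀ hfpos (by positivity)]
  calc |∏ j ∈ Finset.range (n+4), (α - 1 - (j:ℝ))| * ((n:ℝ)+1)
      ≤ (24 * Nat.factorial n) * ((n:ℝ)+1) :=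
        mul_le_mul_of_nonneg_right hb (by positivity)
    _ = 24 * Nat.factorial (n+1) := by push_cast [Nat.factorial_succ]; ring
    _ ≤ 24 * Nat.factorial (n+4) := by
        have : Nat.factorial (n+1) ≤ Nat.factorial (n+4) := Nat.factorial_le (by omega)
        have := (Nat.cast_le (α := ℝ)).2 this
        linarith

/-- For `4 < α < 5`, the GL weights satisfy `w_1 = -α < 0`,
`w_2 = Γ(α+1)/(2Γ(α-1)) > 0`, `w_3 = -Γ(α+1)/(6Γ(α-2)) < 0`,
`w_4 = Γ(α+1)/(24Γ(α-3)) > 0`, `w_k < 0` for `k ≥ 5`, and the sum of negative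
weights is `W_- = w_1 + w_3 + Σ_{k≥5} w_k = -1 - Γ(α+1)/(2Γ(α-1)) - Γ(α+1)/(24Γ(α-3))`. -/
theorem gl_weights_four_lt_alpha_lt_five (α : ℝ) (hα1 : 4 < α) (hα2 : α < 5) :
    ((-1 : ℝ) ^ 1 * genBinom α 1 = -α) ∧ (-α < 0) ∧
    ((-1 : ℝ) ^ 2 * genBinom α 2 = Real.Gamma (α + 1) / (2 * Real.Gamma (α - 1))) ∧
    (0 < Real.Gamma (α + 1) / (2 * Real.Gamma (α - 1))) ∧
    ((-1 : ℝ) ^ 3 * genBinom α 3 = -(Real.Gamma (α + 1) / (6 * Real.Gamma (α - 2)))) ∧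
    (-(Real.Gamma (α + 1) / (6 * Real.Gamma (α - 2))) < 0) ∧
    ((-1 : ℝ) ^ 4 * genBinom α 4 = Real.Gamma (α + 1) / (24 * Real.Gamma (α - 3))) ∧
    (0 < Real.Gamma (α + 1) / (24 * Real.Gamma (α - 3))) ∧
    (∀ k : ℕ, 5 ≤ k → (-1 : ℝ) ^ k * genBinom α k < 0) ∧
    Summable (fun k : ℕ => (-1 : ℝ) ^ (k + 5) * genBinom α (k + 5)) ∧
    ((-1 : ℝ) ^ 1 * genBinom α 1 + (-1 : ℝ) ^ 3 * genBinom α 3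
        + ∑' k : ℕ, (-1 : ℝ) ^ (k + 5) * genBinom α (k + 5)
      = -1 - Real.Gamma (α + 1) / (2 * Real.Gamma (α - 1))
          - Real.Gamma (α + 1) / (24 * Real.Gamma (α - 3))) := by
  have h1 : 0 < α - 1 := by linarith
  have h2 : 0 < α - 2 := by linarith
  have h3 : 0 < α - 3 := by linarith
  have h4 : 0 < α - 4 := by linarith
  -- explicit small genBinom values
  have gb1 : genBinom α 1 = α := by simp [genBinom]
  have gb2 : genBinom α 2 = α*(α-1)/2 := by
    simp [genBinom, Finset.prod_range_succ, Nat.factorial]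
  have gb3 : genBinom α 3 = α*(α-1)*(α-2)/6 := by
    simp [genBinom, Finset.prod_range_succ, Nat.factorial]
  have gb4 : genBinom α 4 = α*(α-1)*(α-2)*(α-3)/24 := by
    simp [genBinom, Finset.prod_range_succ, Nat.factorial]
  -- Gamma identities
  have hΓ3pos : 0 < Real.Gamma (α - 3) := Real.Gamma_pos_of_pos h3
  have hΓ2pos : 0 < Real.Gamma (α - 2) := Real.Gamma_pos_of_pos h2
  have hΓ1pos : 0 < Real.Gamma (α - 1) := Real.Gamma_pos_of_pos h1
  have hg3 : Real.Gamma (α-2) = (α-3) * Real.Gamma (α-3) := by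
    have := Real.Gamma_add_one (s := α-3) (ne_of_gt h3)
    rwa [show α-3+1 = α-2 by ring] at this
  have hg2 : Real.Gamma (α-1) = (α-2) * Real.Gamma (α-2) := by
    have := Real.Gamma_add_one (s := α-2) (ne_of_gt h2)
    rwa [show α-2+1 = α-1 by ring] at this
  have hg1 : Real.Gamma α = (α-1) * Real.Gamma (α-1) := by
    have := Real.Gamma_add_one (s := α-1) (ne_of_gt h1)
    rwa [show α-1+1 = α by ring] at this
  have hg0 : Real.Gamma (α+1) = α * Real.Gamma α :=
    Real.Gamma_add_one (by positivity)
  have hΓf1 : Real.Gamma (α + 1) / (2 * Real.Gamma (α - 1)) = α*(α-1)/2 := by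
    rw [hg0, hg1]; field_simp
  have hΓf2 : Real.Gamma (α + 1) / (6 * Real.Gamma (α - 2)) = α*(α-1)*(α-2)/6 := by
    rw [hg0, hg1, hg2]; field_simp
  have hΓf3 : Real.Gamma (α + 1) / (24 * Real.Gamma (α - 3)) = α*(α-1)*(α-2)*(α-3)/24 := by
    rw [hg0, hg1, hg2, hg3]; field_simp
  -- partial sums
  set w : ℕ → ℝ := fun k => (-1:ℝ)^k * genBinom α k with hw
  have hPS : ∀ n : ℕ, ∑ k ∈ Finset.range n, w (k+5) =
      (-1:ℝ)^(n+4) * genBinom (α-1) (n+4) - (-1:ℝ)^4 * genBinom (α-1) 4 := by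
    intro n
    have e1 : ∑ k ∈ Finset.range (5+n), w k =
        ∑ k ∈ Finset.range 5, w k + ∑ k ∈ Finset.range n, w (5+k) :=
      Finset.sum_range_add w 5 n
    have e2 : ∑ k ∈ Finset.range (5+n), w k = (-1:ℝ)^(n+4) * genBinom (α-1) (n+4) := by
      have := partial_sum_eq α (n+4)
      rw [show (5+n) = (n+4)+1 by omega]
      exact this
    have e3 : ∑ k ∈ Finset.range 5, w k = (-1:ℝ)^4 * genBinom (α-1) 4 := by
      have := partial_sum_eq α 4
      rw [show (5:ℕ) = 4+1 from rfl]
      exact this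
    have e4 : ∑ k ∈ Finset.range n, w (5+k) = ∑ k ∈ Finset.range n, w (k+5) := by
      apply Finset.sum_congr rfl; intros; rw [Nat.add_comm]
    rw [e2, e3, e4] at e1
    linarith
  -- limit of tail term
  have hTend0 : Filter.Tendsto (fun n : ℕ => (-1:ℝ)^(n+4) * genBinom (α-1) (n+4))
      Filter.atTop (nhds 0) := by
    apply squeeze_zero_norm (a := fun n : ℕ => 24 / ((n:ℝ)+1))
    · intro n
      have hb := tail_bound α hα1 hα2 n
      rw [abs_mul, abs_pow, abs_neg, abs_one, one_pow, one_mul] at hb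
      simpa [Real.norm_eq_abs] using hb
    · have h := tendsto_one_div_add_atTop_nhds_zero_nat (𝕜 := ℝ)
      have := h.const_mul (24:ℝ)
      simpa [div_eq_mul_inv, mul_comm, mul_assoc] using this
  -- summability
  have hneg := genBinom_neg α hα1 hα2
  have hgnonneg : ∀ k : ℕ, 0 ≤ -(w (k+5)) := by
    intro k
    have := hneg (k+5) (by omega)
    simp only [hw]
    linarith
  set S4 : ℝ := (-1:ℝ)^4 * genBinom (α-1) 4 with hS4
  have hbdd : ∀ n : ℕ, ∑ k ∈ Finset.range n, -(w (k+5)) ≤ S4 + 24 := by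
    intro n
    have := hPS n
    have hsum : ∑ k ∈ Finset.range n, -(w (k+5)) = -(∑ k ∈ Finset.range n, w (k+5)) := by
      rw [Finset.sum_neg_distrib]
    rw [hsum, this]
    have hb := tail_bound α hα1 hα2 n
    have h24 : 24 / ((n:ℝ)+1) ≤ 24 := by
      rw [div_le_iff₀ (by positivity)]
      nlinarith [Nat.cast_nonneg (α := ℝ) n]
    have := abs_le.1 hb
    linarith [this.1]
  have hgsum : Summable (fun k : ℕ => -(w (k+5))) :=
    summable_of_sum_range_le hgnonneg hbdd
  have hsummable : Summable (fun k : ℕ => w (k+5)) := by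
    have := hgsum.neg
    simpa using this
  -- tsum value
  have htendPS : Filter.Tendsto (fun n : ℕ => ∑ k ∈ Finset.range n, w (k+5))
      Filter.atTop (nhds (-S4)) := by
    have := hTend0.sub (tendsto_const_nhds (x := S4))
    simp only [zero_sub] at this
    apply this.congr
    intro n
    exact (hPS n).symm
  have hhs : HasSum (fun k : ℕ => w (k+5)) (-S4) :=
    (hsummable.hasSum_iff_tendsto_nat).2 htendPS
  have htsum : ∑' k : ℕ, w (k+5) = -S4 := hhs.tsum_eq
  -- compute S4 explicitly:  S4 = ∑_{k<5} w k
  have hS4val : S4 = 1 - α + α*(α-1)/2 - α*(α-1)*(α-2)/6 + α*(α-1)*(α-2)*(α-3)/24 := by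
    have e3 : ∑ k ∈ Finset.range 5, w k = S4 := by
      have := partial_sum_eq α 4
      rw [show (5:ℕ) = 4+1 from rfl]
      exact this
    rw [← e3]
    simp only [hw]
    rw [Finset.sum_range_succ, Finset.sum_range_succ, Finset.sum_range_succ,
      Finset.sum_range_succ, Finset.sum_range_succ, Finset.sum_range_zero]
    simp only [gb1, gb2, gb3, gb4]
    have gb0 : genBinom α 0 = 1 := by simp [genBinom]
    rw [gb0]
    ring
  refine ⟨by rw [gb1]; ring, by linarith, ?_, ?_, ?_, ?_, ?_, ?_, hneg, hsummable, ?_⟩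
  · rw [gb2, hΓf1]; ring
  · rw [hΓf1]; positivity
  · rw [gb3, hΓf2]; ring
  · rw [hΓf2]
    have : 0 < α*(α-1)*(α-2)/6 := by positivity
    linarith
  · rw [gb4, hΓf3]; ring
  · rw [hΓf3]; positivity
  · rw [htsum, hS4val, gb1, gb3, hΓf1, hΓf3]
    ring
end

section
/- Let 0 < α < 1, h > 0, t ∈ ℝ, and let f : ℝ → ℝ be a bounded measurable function. Let Y₁, Y₂, … be independent, identically distributed random variables taking values in {1,2,3,…}, each with the Sibuya distribution with parameter α, i.e. P(Y_n = k) = (-1)^{k+1} binom(α,k). Then, with probability one, (1/h^α)·[f(t) - (1/N) Σ_{n=1}^{N} f(t - Y_n h)] converges, as N → ∞, to A_h^α f(t) := (1/h^α) Σ_{k=0}^∞ (-1)^k binom(α,k) f(t-kh). -/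
open Real Filter MeasureTheory ProbabilityTheory

lemma genBinom_zero (a : ℝ) : genBinom a 0 = 1 := by
  simp [genBinom]

lemma genBinom_succ (a : ℝ) (k : ℕ) :
    genBinom a (k + 1) = genBinom a k * (a - k) / (k + 1) := by
  have hk : (Nat.factorial k : ℝ) ≠ 0 := Nat.cast_ne_zero.mpr (Nat.factorial_ne_zero k)
  have hk1 : ((k : ℝ) + 1) ≠ 0 := by positivity
  simp only [genBinom, Finset.prod_range_succ, Nat.factorial_succ]
  push_cast
  rw [div_mul_eq_mul_div, div_div, mul_comm ((k:ℝ)+1)]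

lemma sibuya_nonneg {α : ℝ} (hα0 : 0 < α) (hα1 : α < 1) {k : ℕ} (hk : 1 ≤ k) :
    0 ≤ (-1 : ℝ) ^ (k + 1) * genBinom α k := by
  induction k, hk using Nat.le_induction with
  | base =>
    simp [genBinom]
    positivity
  | succ n hn ih =>
    rw [genBinom_succ]
    have h1 : ((-1 : ℝ)) ^ (n + 1 + 1) = -((-1 : ℝ) ^ (n + 1)) := by ring
    have h2 : (α - n) ≤ 0 := by
      have : (1 : ℝ) ≤ n := by exact_mod_cast hn
      linarith
    have h3 : (0 : ℝ) < (n : ℝ) + 1 := by positivity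
    rw [h1]
    have : (-1 : ℝ) ^ (n + 1) * (genBinom α n * (α - n) / (n + 1))
        = ((-1 : ℝ) ^ (n + 1) * genBinom α n) * (α - n) / (n + 1) := by ring
    rw [neg_mul, this]
    have := mul_nonpos_of_nonneg_of_nonpos ih h2
    have := div_nonpos_of_nonpos_of_nonneg this (le_of_lt h3)
    linarith

/-- Monte Carlo evaluation of the Grünwald–Letnikov fractional derivative of order
`0 < α < 1`: if `Y₁, Y₂, …` are i.i.d. Sibuya(α) random variables, then almost surely
`(1/h^α)[f(t) - (1/N) Σ_{n<N} f(t - Yₙ h)] → A_h^α f(t)` as `N → ∞`. -/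
theorem monte_carlo_gl_derivative_alpha_lt_one
    (α : ℝ) (hα0 : 0 < α) (hα1 : α < 1) (h : ℝ) (hh : 0 < h) (t : ℝ)
    (f : ℝ → ℝ) (hf_meas : Measurable f) (hf_bdd : ∃ M : ℝ, ∀ x, |f x| ≤ M)
    {Ω : Type*} [MeasurableSpace Ω] (P : Measure Ω) [IsProbabilityMeasure P]
    (Y : ℕ → Ω → ℕ) (hY_meas : ∀ n, Measurable (Y n))
    (hY_indep : iIndepFun Y P)
    (hY_pos : ∀ n ω, 1 ≤ Y n ω)
    (hY_distrib : ∀ n k, 1 ≤ k →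
      P {ω | Y n ω = k} = ENNReal.ofReal ((-1 : ℝ) ^ (k + 1) * genBinom α k)) :
    ∀ᵐ ω ∂P, Tendsto
      (fun N : ℕ => (1 / h ^ α) *
        (f t - (1 / (N : ℝ)) * ∑ n ∈ Finset.range N, f (t - (Y n ω : ℝ) * h)))
      atTop
      (nhds ((1 / h ^ α) *
        ∑' k : ℕ, (-1 : ℝ) ^ k * genBinom α k * f (t - (k : ℝ) * h))) := by
  obtain ⟨M, hM⟩ := hf_bdd
  set g : ℕ → ℝ := fun k => f (t - (k : ℝ) * h) with hg
  have hg_meas : Measurable g := measurable_from_top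
  set X : ℕ → Ω → ℝ := fun n ω => g (Y n ω) with hX
  -- the pushforward measures
  have hY_ae : ∀ n, AEMeasurable (Y n) P := fun n => (hY_meas n).aemeasurable
  have hmap_prob : ∀ n, IsProbabilityMeasure (P.map (Y n)) :=
    fun n => Measure.isProbabilityMeasure_map (hY_ae n)
  have hpre : ∀ n k, Y n ⁻¹' {k} = {ω | Y n ω = k} := by
    intro n k; ext ω; simp [Set.preimage, Set.mem_singleton_iff]
  have hzero : ∀ n, P.map (Y n) {0} = 0 := by
    intro n
    rw [Measure.map_apply (hY_meas n) (measurableSet_singleton 0), hpre]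
    have he : {ω | Y n ω = 0} = ∅ := by
      ext ω
      simp only [Set.mem_setOf_eq, Set.mem_empty_iff_false, iff_false]
      intro hc
      have := hY_pos n ω
      omega
    rw [he]
    exact measure_empty
  have hsing : ∀ n k, 1 ≤ k →
      P.map (Y n) {k} = ENNReal.ofReal ((-1 : ℝ) ^ (k + 1) * genBinom α k) := by
    intro n k hk
    rw [Measure.map_apply (hY_meas n) (measurableSet_singleton k), hpre]
    exact hY_distrib n k hk
  have hmap_eq : ∀ n, P.map (Y n) = P.map (Y 0) := by
    intro n
    apply Measure.ext_of_singleton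
    intro k
    rcases Nat.eq_zero_or_pos k with rfl | hk
    · rw [hzero n, hzero 0]
    · rw [hsing n k hk, hsing 0 k hk]
  have hidentY : ∀ n, IdentDistrib (Y n) (Y 0) P P :=
    fun n => ⟨hY_ae n, hY_ae 0, hmap_eq n⟩
  have hidentX : ∀ n, IdentDistrib (X n) (X 0) P P :=
    fun n => (hidentY n).comp hg_meas
  have hindepX : Pairwise (Function.onFun (IndepFun · · P) X) := by
    intro i j hij
    exact (hY_indep.indepFun hij).comp hg_meas hg_meas
  have hint : Integrable (X 0) P := by
    apply Integrable.mono' (integrable_const M)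
      ((hg_meas.comp (hY_meas 0)).aestronglyMeasurable)
    filter_upwards with ω
    exact hM _
  -- strong law
  have hslln := strong_law_ae_real X hint hindepX hidentX
  -- compute the expectation
  have hgint : Integrable g (P.map (Y 0)) := by
    apply Integrable.mono' (integrable_const M) hg_meas.aestronglyMeasurable
    filter_upwards with k
    exact hM _
  have hE : P[X 0] = ∑' k, (P.map (Y 0) {k}).toReal * g k := by
    have h1 : ∫ ω, X 0 ω ∂P = ∫ k, g k ∂(P.map (Y 0)) :=
      (integral_map (hY_ae 0) hg_meas.aestronglyMeasurable).symm
    rw [h1, integral_countable' hgint]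
    simp [smul_eq_mul, Measure.real]
  set c : ℕ → ℝ := fun k => (P.map (Y 0) {k}).toReal * g k with hc
  -- summability
  have hp'_summable : Summable (fun k => (P.map (Y 0) {k}).toReal) := by
    apply ENNReal.summable_toReal
    have hle : ∑' k : ℕ, P.map (Y 0) {k} ≤ P.map (Y 0) Set.univ := by
      apply tsum_measure_le_measure_univ
        (fun k => (measurableSet_singleton k).nullMeasurableSet)
      intro i j hij
      exact (Set.disjoint_singleton.mpr hij).aedisjoint
    have : P.map (Y 0) Set.univ = 1 := measure_univ
    rw [this] at hle
    exact ne_top_of_le_ne_top ENNReal.one_ne_top hle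
  have hc_summable : Summable c := by
    apply Summable.of_norm_bounded (hp'_summable.mul_right M)
    intro k
    rw [hc]
    simp only [norm_mul, Real.norm_eq_abs]
    have h1 : |(P.map (Y 0) {k}).toReal| = (P.map (Y 0) {k}).toReal :=
      abs_of_nonneg ENNReal.toReal_nonneg
    rw [h1]
    exact mul_le_mul_of_nonneg_left (hM _) ENNReal.toReal_nonneg
  -- identify the target series
  set u : ℕ → ℝ := fun k => (-1 : ℝ) ^ k * genBinom α k * g k with hu
  set d : ℕ → ℝ := fun k => if k = 0 then g 0 else 0 with hd
  have hud : ∀ k, u k = d k - c k := by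
    intro k
    rcases Nat.eq_zero_or_pos k with rfl | hk
    · simp [hu, hd, hc, genBinom_zero, hzero 0]
    · have hk' : k ≠ 0 := Nat.one_le_iff_ne_zero.mp hk
      simp only [hu, hd, hc, if_neg hk']
      rw [hsing 0 k hk, ENNReal.toReal_ofReal (sibuya_nonneg hα0 hα1 hk)]
      have : (-1 : ℝ) ^ k = -((-1 : ℝ) ^ (k + 1)) := by ring
      rw [this]
      ring
  have hd_summable : Summable d := by
    apply summable_of_finite_support
    apply Set.Finite.subset (Set.finite_singleton 0)
    intro k hk
    simp only [Function.mem_support, hd] at hk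
    by_contra hne
    exact hk (if_neg hne)
  have htsum_u : ∑' k, u k = g 0 - ∑' k, c k := by
    calc ∑' k, u k = ∑' k, (d k - c k) := by exact tsum_congr hud
    _ = ∑' k, d k - ∑' k, c k := Summable.tsum_sub hd_summable hc_summable
    _ = g 0 - ∑' k, c k := by
        congr 1
        simp only [hd]
        exact tsum_ite_eq 0 (fun _ => g 0)
  have hg0 : g 0 = f t := by simp [hg]
  -- conclusion
  filter_upwards [hslln] with ω hω
  have h1 : Tendsto (fun N : ℕ => (1 / h ^ α) * (f t - (∑ i ∈ Finset.range N, X i ω) / N))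
      atTop (nhds ((1 / h ^ α) * (f t - P[X 0]))) :=
    (tendsto_const_nhds.sub hω).const_mul _
  have h2 : (1 / h ^ α) * (f t - P[X 0])
      = (1 / h ^ α) * ∑' k : ℕ, (-1 : ℝ) ^ k * genBinom α k * f (t - (k : ℝ) * h) := by
    have : ∑' k : ℕ, (-1 : ℝ) ^ k * genBinom α k * f (t - (k : ℝ) * h) = ∑' k, u k := rfl
    rw [this, htsum_u, hg0, hE]
  rw [h2] at h1
  apply h1.congr
  intro N
  congr 1
  congr 1
  rw [div_eq_inv_mul, ← one_div]
end
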